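/- Let R be a ring and S a multiplicatively closed subset of regular elements of R that is a right denominator (right Ore) set, and let Q := R[S⁻¹] be the right ring of fractions. If Q is projective as a left R-module, then every element of S is invertible in R; consequently Q = R. -/
import Mathlib


/-!
STATEMENT 12: Let R be a ring and S a multiplicatively closed subset of regular elements
of R that is a right denominator (right Ore) set, and let Q := R[S⁻¹] be the right ring of
fractions. If Q is projective as a left R-module, then every element of S is invertible in
R; consequently Q = R.

The right Ore localization is formalized by a ring `Q` and an injective ring homomorphism
`φ : R →+* Q` such that `φ s` is invertible for every `s ∈ S` and every element of `Q` is a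
right fraction `φ r * (φ s)⁻¹`, i.e. `q * φ s = φ r` for some `r ∈ R`, `s ∈ S`; `Q` is a
left `R`-module via `r • q = φ r * q`.  The conclusion `Q = R` is expressed by the
surjectivity of `φ`.
-/

universe u

theorem stmt12 (R Q : Type u) [Ring R] [Ring Q] (S : Submonoid R)
    (hreg : ∀ s ∈ S, IsRegular s)
    (hOre : ∀ (a : R), ∀ s ∈ S, ∃ (a' : R) (s' : R), s' ∈ S ∧ a * s' = s * a')
    (φ : R →+* Q) (hinj : Function.Injective φ)
    (hunit : ∀ s ∈ S, IsUnit (φ s))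
    (hfrac : ∀ q : Q, ∃ (r : R) (s : R), s ∈ S ∧ q * φ s = φ r)
    [Module R Q] (hsmul : ∀ (r : R) (q : Q), r • q = φ r * q)
    (hproj : Module.Projective R Q) :
    (∀ s ∈ S, IsUnit s) ∧ Function.Surjective φ := by
  classical
  -- dual basis from projectivity
  obtain ⟨σ, hσ⟩ := (Module.projective_def).mp hproj
  set g : Q →₀ R := σ 1 with hg
  have hg1 : (g.support.sum fun x => g x • x) = 1 := by
    have := hσ 1
    rwa [Finsupp.linearCombination_apply, Finsupp.sum] at this
  -- common denominator lemma
  have hcommon : ∀ F : Finset Q, ∃ t ∈ S, ∀ x : Q, ∃ a : R, x ∈ F → x * φ t = φ a := by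
    intro F
    induction F using Finset.induction_on with
    | empty => exact ⟨1, S.one_mem, fun x => ⟨0, fun h => absurd h (Finset.notMem_empty x)⟩⟩
    | @insert q F hq ih =>
      obtain ⟨t, htS, ht⟩ := ih
      obtain ⟨r, t₀, ht₀S, hrt₀⟩ := hfrac q
      obtain ⟨a', s', hs'S, hOre'⟩ := hOre t₀ t htS
      refine ⟨t₀ * s', S.mul_mem ht₀S hs'S, fun x => ?_⟩
      by_cases hx : x = q
      · refine ⟨r * s', fun _ => ?_⟩
        subst hx
        rw [map_mul, ← mul_assoc, hrt₀, ← map_mul]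
      · obtain ⟨a, ha⟩ := ht x
        refine ⟨a * a', fun hmem => ?_⟩
        have hxF : x ∈ F := by
          rcases Finset.mem_insert.mp hmem with h | h
          · exact absurd h hx
          · exact h
        have : φ (t₀ * s') = φ (t * a') := by rw [hOre']
        rw [this, map_mul, ← mul_assoc, ha hxF, ← map_mul]
  obtain ⟨t, htS, ht⟩ := hcommon g.support
  choose A hA using ht
  -- t = ∑ g x * A x
  have htsum : t = g.support.sum fun x => g x * A x := by
    apply hinj
    have : φ t = (g.support.sum fun x => g x • x) * φ t := by rw [hg1, one_mul]
    rw [this, Finset.sum_mul, map_sum]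
    refine Finset.sum_congr rfl fun x hx => ?_
    rw [hsmul, mul_assoc, hA x hx, ← map_mul]
  -- divisibility of coefficients of g
  have hdiv : ∀ u ∈ S, ∃ h : Q →₀ R, ∀ x : Q, g x = u * h x := by
    intro u huS
    have hu := hunit u huS
    refine ⟨σ ((hu.unit⁻¹ : Qˣ) : Q), fun x => ?_⟩
    have h1 : (1 : Q) = u • ((hu.unit⁻¹ : Qˣ) : Q) := by
      rw [hsmul]
      have : φ u * ((hu.unit⁻¹ : Qˣ) : Q) = (hu.unit : Q) * ((hu.unit⁻¹ : Qˣ) : Q) := by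
        rw [hu.unit_spec]
      rw [this, ← Units.val_mul, mul_inv_cancel, Units.val_one]
    calc g x = (σ 1) x := rfl
      _ = (σ (u • ((hu.unit⁻¹ : Qˣ) : Q))) x := by rw [← h1]
      _ = (u • σ ((hu.unit⁻¹ : Qˣ) : Q)) x := by rw [map_smul]
      _ = u * (σ ((hu.unit⁻¹ : Qˣ) : Q)) x := by rw [Finsupp.smul_apply, smul_eq_mul]
  -- main claim: every s ∈ S is a unit
  have main : ∀ s ∈ S, IsUnit s := by
    intro s hsS
    obtain ⟨h, hh⟩ := hdiv (t * s) (S.mul_mem htS hsS)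
    set c : R := g.support.sum fun x => h x * A x with hc
    have hts : t * 1 = t * (s * c) := by
      rw [mul_one]
      calc t = g.support.sum fun x => g x * A x := htsum
        _ = g.support.sum fun x => t * (s * (h x * A x)) := by
            refine Finset.sum_congr rfl fun x _ => ?_
            rw [hh x]; simp only [mul_assoc]
        _ = t * (s * c) := by rw [hc, Finset.mul_sum, Finset.mul_sum]
    have hsc : s * c = 1 := ((hreg t htS).left hts).symm
    -- now get c * s = 1 using injectivity and that φ s is a unit
    have hu := hunit s hsS
    have h1 : φ s * φ c = 1 := by rw [← map_mul, hsc, map_one]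
    have h2 : φ c = ((hu.unit⁻¹ : Qˣ) : Q) := by
      have := Units.inv_eq_of_mul_eq_one_right (u := hu.unit) (by rw [hu.unit_spec]; exact h1)
      exact this.symm
    have hcs : c * s = 1 := by
      apply hinj
      rw [map_mul, map_one, h2]
      exact hu.val_inv_mul
    exact ⟨⟨s, c, hsc, hcs⟩, rfl⟩
  refine ⟨main, fun q => ?_⟩
  obtain ⟨r, s, hsS, hq⟩ := hfrac q
  obtain ⟨v, hv⟩ := main s hsS
  refine ⟨r * (v⁻¹ : Rˣ), ?_⟩
  have : φ s * φ ((v⁻¹ : Rˣ) : R) = 1 := by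
    rw [← map_mul, ← hv, ← Units.val_mul, mul_inv_cancel, Units.val_one, map_one]
  calc φ (r * ((v⁻¹ : Rˣ) : R)) = φ r * φ ((v⁻¹ : Rˣ) : R) := map_mul φ _ _
    _ = q * φ s * φ ((v⁻¹ : Rˣ) : R) := by rw [hq]
    _ = q * (φ s * φ ((v⁻¹ : Rˣ) : R)) := by rw [mul_assoc]
    _ = q := by rw [this, mul_one]
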